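/- For every integer d ≥ 3 and every finite simple graph G on n ≥ 1 vertices with maximum degree at most d, the average energy of G satisfies ε(G) ≤ √(d−1) + 1/(d + √(d−1)). -/

import Mathlib

open Matrix Polynomial

private lemma charpoly_conj_aux {m : Type*} [Fintype m] [DecidableEq m]
    {R : Type*} [CommRing R] (U M V : Matrix m m R)
    (hUV : U * V = 1) : (U * M * V).charpoly = M.charpoly := by
  have hchm : (U * M * V).charmatrix = U.map C * M.charmatrix * V.map C := by
    unfold Matrix.charmatrix
    rw [RingHom.mapMatrix_apply, RingHom.mapMatrix_apply, Matrix.mul_sub, Matrix.sub_mul]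
    congr 1
    · have h1 : U.map (C : R → R[X]) * Matrix.scalar m (Polynomial.X : R[X])
          = Matrix.scalar m (Polynomial.X : R[X]) * U.map C :=
        (Matrix.scalar_commute (Polynomial.X : R[X]) (fun r => Commute.all _ r) (U.map C)).symm
      rw [h1, Matrix.mul_assoc, ← Matrix.map_mul (f := (C : R →+* R[X])), hUV,
        Matrix.map_one _ (map_zero _) (map_one _), Matrix.mul_one]
    · rw [← Matrix.map_mul (f := (C : R →+* R[X])), ← Matrix.map_mul (f := (C : R →+* R[X]))]
  rw [Matrix.charpoly, Matrix.charpoly, hchm, Matrix.det_mul, Matrix.det_mul,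
    mul_comm (det (U.map C)) _, mul_assoc, ← Matrix.det_mul,
    ← Matrix.map_mul (f := (C : R →+* R[X])), hUV,
    Matrix.map_one _ (map_zero _) (map_one _), Matrix.det_one, mul_one]

private lemma matConjPowAux {m : Type*} [Fintype m] [DecidableEq m] {R : Type*} [CommRing R]
    (U W V : Matrix m m R) (hUV : U * V = 1) (hVU : V * U = 1) (k : ℕ) :
    (U * W * V) ^ k = U * W ^ k * V := by
  induction k with
  | zero => simpa using hUV.symm
  | succ k ih =>
      rw [pow_succ, ih, pow_succ]
      calc U * W ^ k * V * (U * W * V)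
          = U * W ^ k * (V * U) * W * V := by simp only [Matrix.mul_assoc]
        _ = U * (W ^ k * W) * V := by rw [hVU]; simp only [Matrix.mul_one, Matrix.mul_assoc]

private lemma herm_pow_eq {m : Type*} [Fintype m] [DecidableEq m]
    {A : Matrix m m ℝ} (hA : A.IsHermitian) (k : ℕ) :
    A ^ k = (hA.eigenvectorUnitary : Matrix m m ℝ) * (Matrix.diagonal hA.eigenvalues) ^ k *
      star (hA.eigenvectorUnitary : Matrix m m ℝ) := by
  have hUV : (hA.eigenvectorUnitary : Matrix m m ℝ) *
      star (hA.eigenvectorUnitary : Matrix m m ℝ) = 1 :=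
    Matrix.mem_unitaryGroup_iff.mp hA.eigenvectorUnitary.2
  have hVU : star (hA.eigenvectorUnitary : Matrix m m ℝ) *
      (hA.eigenvectorUnitary : Matrix m m ℝ) = 1 :=
    Matrix.mem_unitaryGroup_iff'.mp hA.eigenvectorUnitary.2
  have hspec : A = (hA.eigenvectorUnitary : Matrix m m ℝ) * Matrix.diagonal hA.eigenvalues *
      star (hA.eigenvectorUnitary : Matrix m m ℝ) := by
    have := hA.spectral_theorem
    rwa [show RCLike.ofReal ∘ hA.eigenvalues = hA.eigenvalues by
      ext i; simp [RCLike.ofReal_real_eq_id]] at this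
  rw [show A ^ k = ((hA.eigenvectorUnitary : Matrix m m ℝ) * Matrix.diagonal hA.eigenvalues *
      star (hA.eigenvectorUnitary : Matrix m m ℝ)) ^ k from congrArg (· ^ k) hspec]
  exact matConjPowAux _ _ _ hUV hVU k

private lemma herm_trace_pow {m : Type*} [Fintype m] [DecidableEq m]
    {A : Matrix m m ℝ} (hA : A.IsHermitian) (k : ℕ) :
    (A ^ k).trace = ∑ i, hA.eigenvalues i ^ k := by
  rw [herm_pow_eq hA k, Matrix.trace_mul_comm, ← Matrix.mul_assoc,
    Matrix.mem_unitaryGroup_iff'.mp hA.eigenvectorUnitary.2, Matrix.one_mul,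
    Matrix.diagonal_pow, Matrix.trace_diagonal]
  simp [Pi.pow_apply]

private lemma herm_charpoly {m : Type*} [Fintype m] [DecidableEq m] [LinearOrder m]
    {A : Matrix m m ℝ} (hA : A.IsHermitian) :
    A.charpoly = ∏ i, (X - C (hA.eigenvalues i)) := by
  have h1 := herm_pow_eq hA 1
  rw [pow_one, pow_one] at h1
  rw [show A.charpoly = ((hA.eigenvectorUnitary : Matrix m m ℝ) * Matrix.diagonal hA.eigenvalues *
      star (hA.eigenvectorUnitary : Matrix m m ℝ)).charpoly from congrArg _ h1,
    charpoly_conj_aux _ _ _ (Matrix.mem_unitaryGroup_iff.mp hA.eigenvectorUnitary.2),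
    Matrix.charpoly_of_upperTriangular _ (Matrix.blockTriangular_diagonal _)]
  simp

set_option maxHeartbeats 2000000 in
/-- For every integer `d ≥ 3` and every finite simple graph `G` on `n ≥ 1`
vertices with maximum degree at most `d`, the average energy
`ε(G) = (1/n) · ∑ i, |λ i|` satisfies `ε(G) ≤ √(d-1) + 1/(d + √(d-1))`.
Here `μ : Fin n → ℝ` lists the eigenvalues of the adjacency matrix of `G`
(with multiplicity). -/
theorem average_energy_upper_bound
    (d n : ℕ) (hd : 3 ≤ d) (hn : 1 ≤ n)
    (G : SimpleGraph (Fin n)) [DecidableRel G.Adj]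
    (hdeg : ∀ v : Fin n, G.degree v ≤ d)
    (μ : Fin n → ℝ)
    (hchar : (G.adjMatrix ℝ).charpoly
      = ∏ i : Fin n, (Polynomial.X - Polynomial.C (μ i))) :
    (1 / (n : ℝ)) * ∑ i : Fin n, |μ i|
      ≤ Real.sqrt ((d : ℝ) - 1) + 1 / ((d : ℝ) + Real.sqrt ((d : ℝ) - 1)) := by
  classical
  set A := G.adjMatrix ℝ with hAdef
  have hA : A.IsHermitian := by
    rw [Matrix.IsHermitian, Matrix.conjTranspose_eq_transpose_of_trivial]
    exact G.isSymm_adjMatrix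
  set ν := hA.eigenvalues with hνdef
  set s := Real.sqrt ((d : ℝ) - 1) with hsdef
  have hd3 : (3 : ℝ) ≤ (d : ℝ) := by exact_mod_cast hd
  have hn1 : (1 : ℝ) ≤ (n : ℝ) := by exact_mod_cast hn
  have hn0 : (0 : ℝ) < (n : ℝ) := by linarith
  have hs2 : s ^ 2 = (d : ℝ) - 1 := Real.sq_sqrt (by linarith)
  have hspos : 0 < s := Real.sqrt_pos.mpr (by linarith)
  have hs1 : 1 ≤ s := by nlinarith [hs2, hspos]
  -- eigenvalue multiset identification
  have hcv : A.charpoly = ∏ i, (X - C (ν i)) := herm_charpoly hA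
  have hms : Multiset.map μ Finset.univ.val = Multiset.map ν Finset.univ.val := by
    have h1 : (Multiset.map (fun a => X - C a) (Multiset.map μ Finset.univ.val)).prod
        = (Multiset.map (fun a => X - C a) (Multiset.map ν Finset.univ.val)).prod := by
      rw [Multiset.map_map, Multiset.map_map]
      exact (hchar.symm.trans hcv : _)
    have h2 := congrArg Polynomial.roots h1
    rwa [Polynomial.roots_multiset_prod_X_sub_C, Polynomial.roots_multiset_prod_X_sub_C] at h2
  have hsum : ∀ f : ℝ → ℝ, ∑ i, f (μ i) = ∑ i, f (ν i) := by
    intro f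
    have h1 : ∑ i, f (μ i) = (Multiset.map f (Multiset.map μ Finset.univ.val)).sum := by
      rw [Multiset.map_map]; rfl
    rw [h1, hms, Multiset.map_map]; rfl
  -- eigenvalue bound via Gershgorin
  have hrow : ∀ k : Fin n, ∑ l, A k l = (G.degree k : ℝ) := by
    intro k
    simp [hAdef, SimpleGraph.adjMatrix_apply, SimpleGraph.degree,
      SimpleGraph.neighborFinset_eq_filter, Finset.sum_boole]
  have hcol : ∀ k : Fin n, ∑ l, A l k = (G.degree k : ℝ) := by
    intro k
    rw [← hrow k]
    apply Finset.sum_congr rfl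
    intro l _
    simp [hAdef, SimpleGraph.adjMatrix_apply, G.adj_comm]
  have hev : ∀ j, Module.End.HasEigenvalue (Matrix.toLin' A) (ν j) := by
    intro j
    apply Module.End.hasEigenvalue_of_hasEigenvector (x := ⇑(hA.eigenvectorBasis j))
    refine ⟨Module.End.mem_eigenspace_iff.mpr ?_, ?_⟩
    · rw [Matrix.toLin'_apply, hA.mulVec_eigenvectorBasis]
    · have h0 : hA.eigenvectorBasis j ≠ 0 := hA.eigenvectorBasis.orthonormal.ne_zero j
      intro hc
      exact h0 (by ext x; exact congrFun hc x)
  have hνbound : ∀ j, |ν j| ≤ (d : ℝ) := by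
    intro j
    obtain ⟨k, hk⟩ := eigenvalue_mem_ball (hev j)
    rw [Metric.mem_closedBall] at hk
    have hdiag : A k k = 0 := by simp [hAdef, SimpleGraph.adjMatrix_apply]
    have h1 : ∑ l ∈ Finset.univ.erase k, ‖A k l‖ ≤ (d : ℝ) := by
      have h2 : ∑ l ∈ Finset.univ.erase k, ‖A k l‖ ≤ ∑ l, ‖A k l‖ :=
        Finset.sum_le_sum_of_subset_of_nonneg (Finset.erase_subset _ _)
          (fun _ _ _ => norm_nonneg _)
      have h3 : ∑ l, ‖A k l‖ = ∑ l, A k l := by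
        apply Finset.sum_congr rfl
        intro l _
        rw [Real.norm_eq_abs, abs_of_nonneg]
        simp [hAdef, SimpleGraph.adjMatrix_apply]
        positivity
      rw [h3, hrow] at h2
      exact h2.trans (by exact_mod_cast hdeg k)
    rw [hdiag, Real.dist_eq, sub_zero] at hk
    exact hk.trans h1
  have hbound : ∀ i, |μ i| ≤ (d : ℝ) := by
    intro i
    have h1 : μ i ∈ Multiset.map ν Finset.univ.val := by
      rw [← hms]
      exact Multiset.mem_map_of_mem _ (Finset.mem_univ i)
    obtain ⟨j, _, hj⟩ := Multiset.mem_map.mp h1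
    rw [← hj]
    exact hνbound j
  -- trace identities
  set Bm := A * A with hBdef
  have hT2 : (A ^ 2).trace = ∑ v, (G.degree v : ℝ) := by
    rw [pow_two]
    exact Finset.sum_congr rfl fun v _ => G.adjMatrix_mul_self_apply_self v
  have hBdiag : ∀ v, Bm v v = (G.degree v : ℝ) := fun v => G.adjMatrix_mul_self_apply_self v
  have hBsymm : ∀ u v, Bm u v = Bm v u := by
    have ht : Bmᵀ = Bm := by
      rw [hBdef, Matrix.transpose_mul, show Aᵀ = A from G.isSymm_adjMatrix]
    intro u v
    conv_lhs => rw [← ht]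
    rfl
  have hcast : ∀ u v, Bm u v = (((G.adjMatrix ℕ * G.adjMatrix ℕ) u v : ℕ) : ℝ) := by
    intro u v
    rw [hBdef, Matrix.mul_apply, Matrix.mul_apply, Nat.cast_sum]
    apply Finset.sum_congr rfl
    intro w _
    simp [hAdef, SimpleGraph.adjMatrix_apply, apply_ite (Nat.cast : ℕ → ℝ)]
  have hBsq : ∀ u v, Bm u v ≤ (Bm u v) ^ 2 := by
    intro u v
    rw [hcast u v]
    exact_mod_cast Nat.le_self_pow two_ne_zero _
  have hBrow : ∑ v, ∑ u, Bm v u = ∑ w, (G.degree w : ℝ) ^ 2 := by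
    have h1 : ∀ v, ∑ u, Bm v u = ∑ w, A v w * (G.degree w : ℝ) := by
      intro v
      rw [hBdef]
      simp only [Matrix.mul_apply]
      rw [Finset.sum_comm]
      exact Finset.sum_congr rfl fun w _ => by rw [← Finset.mul_sum, hrow]
    rw [Finset.sum_congr rfl fun v _ => h1 v, Finset.sum_comm]
    apply Finset.sum_congr rfl
    intro w _
    rw [← Finset.sum_mul, hcol, sq]
  have hT4 : 2 * (∑ w, (G.degree w : ℝ) ^ 2) - (∑ w, (G.degree w : ℝ)) ≤ (A ^ 4).trace := by
    have h4 : A ^ 4 = Bm * Bm := by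
      rw [show (4 : ℕ) = 2 * 2 from rfl, pow_mul, pow_two, pow_two, hBdef]
    rw [h4]
    have htr : (Bm * Bm).trace = ∑ v, ∑ u, Bm v u * Bm u v := by
      simp [Matrix.trace, Matrix.diag, Matrix.mul_apply]
    rw [htr]
    have hper : ∀ v, (G.degree v : ℝ) ^ 2 + ((∑ u, Bm v u) - Bm v v) ≤ ∑ u, (Bm v u) ^ 2 := by
      intro v
      have e1 : ∑ u, (Bm v u) ^ 2
          = (∑ u ∈ Finset.univ.erase v, (Bm v u) ^ 2) + (Bm v v) ^ 2 :=
        (Finset.sum_erase_add _ _ (Finset.mem_univ v)).symm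
      have e2 : ∑ u, Bm v u = (∑ u ∈ Finset.univ.erase v, Bm v u) + Bm v v :=
        (Finset.sum_erase_add _ _ (Finset.mem_univ v)).symm
      have e3 : ∑ u ∈ Finset.univ.erase v, Bm v u ≤ ∑ u ∈ Finset.univ.erase v, (Bm v u) ^ 2 :=
        Finset.sum_le_sum fun u _ => hBsq v u
      have e4 : (G.degree v : ℝ) ^ 2 = (Bm v v) ^ 2 := by rw [hBdiag]
      rw [e1, e2, e4]
      linarith
    calc 2 * (∑ w, (G.degree w : ℝ) ^ 2) - (∑ w, (G.degree w : ℝ))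
        = ∑ v, ((G.degree v : ℝ) ^ 2 + ((∑ u, Bm v u) - Bm v v)) := by
          rw [Finset.sum_add_distrib, Finset.sum_sub_distrib, hBrow]
          rw [Finset.sum_congr rfl fun v _ => hBdiag v]
          ring
      _ ≤ ∑ v, ∑ u, (Bm v u) ^ 2 := Finset.sum_le_sum fun v _ => hper v
      _ = ∑ v, ∑ u, Bm v u * Bm u v :=
          Finset.sum_congr rfl fun v _ => Finset.sum_congr rfl fun u _ => by
            rw [hBsymm u v, sq]
  -- moments of μ
  set Dg := ∑ v, (G.degree v : ℝ) with hDgdef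
  set Qg := ∑ v, (G.degree v : ℝ) ^ 2 with hQgdef
  have hP2 : ∑ i, (μ i) ^ 2 = Dg := by
    rw [hsum (fun x => x ^ 2), ← herm_trace_pow hA 2, hT2]
  have hP4 : 2 * Qg - Dg ≤ ∑ i, (μ i) ^ 4 := by
    rw [hsum (fun x => x ^ 4), ← herm_trace_pow hA 4]
    exact hT4
  have hDle : Dg ≤ (n : ℝ) * d := by
    rw [hDgdef]
    calc ∑ v, (G.degree v : ℝ) ≤ ∑ _v : Fin n, (d : ℝ) :=
          Finset.sum_le_sum fun v _ => by exact_mod_cast hdeg v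
      _ = (n : ℝ) * d := by simp [Finset.sum_const, mul_comm]
  have hD0 : 0 ≤ Dg := Finset.sum_nonneg fun v _ => by positivity
  have hQD : Dg ^ 2 ≤ (n : ℝ) * Qg := by
    have := sq_sum_le_card_mul_sum_sq (s := Finset.univ) (f := fun v : Fin n => (G.degree v : ℝ))
    simpa [hDgdef, hQgdef] using this
  -- pointwise key inequality
  have hkey : ∀ i, 2 * s * ((d : ℝ) + s) ^ 2 * |μ i| ≤
      -(μ i) ^ 4 + (((d : ℝ) + s) ^ 2 + 2 * s ^ 2) * (μ i) ^ 2
        + s ^ 2 * (d : ℝ) * ((d : ℝ) + 2 * s) := by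
    intro i
    have h0 : (0 : ℝ) ≤ |μ i| := abs_nonneg _
    have h1 : |μ i| ≤ (d : ℝ) := hbound i
    have hid : -|μ i| ^ 4 + (((d : ℝ) + s) ^ 2 + 2 * s ^ 2) * |μ i| ^ 2
          + s ^ 2 * (d : ℝ) * ((d : ℝ) + 2 * s) - 2 * s * ((d : ℝ) + s) ^ 2 * |μ i|
        = (|μ i| - s) ^ 2 * ((d : ℝ) - |μ i|) * (|μ i| + (d : ℝ) + 2 * s) := by ring
    have hp : 0 ≤ (|μ i| - s) ^ 2 * ((d : ℝ) - |μ i|) * (|μ i| + (d : ℝ) + 2 * s) :=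
      mul_nonneg (mul_nonneg (sq_nonneg _) (by linarith)) (by linarith)
    have habs2 : |μ i| ^ 2 = (μ i) ^ 2 := sq_abs _
    have habs4 : |μ i| ^ 4 = (μ i) ^ 4 := by
      rw [show (4 : ℕ) = 2 * 2 from rfl, pow_mul, habs2, ← pow_mul]
    nlinarith [hid, hp, habs2, habs4]
  -- summed inequality
  set S := ∑ i, |μ i| with hSdef
  have hS : 2 * s * ((d : ℝ) + s) ^ 2 * S ≤
      -(∑ i, (μ i) ^ 4) + (((d : ℝ) + s) ^ 2 + 2 * s ^ 2) * (∑ i, (μ i) ^ 2)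
        + s ^ 2 * (d : ℝ) * ((d : ℝ) + 2 * s) * n := by
    have h1 := Finset.sum_le_sum fun i (_ : i ∈ Finset.univ) => hkey i
    have e1 : ∑ i : Fin n, 2 * s * ((d : ℝ) + s) ^ 2 * |μ i|
        = 2 * s * ((d : ℝ) + s) ^ 2 * S := by
      rw [hSdef, Finset.mul_sum]
    have e2 : ∑ i : Fin n, (-(μ i) ^ 4 + (((d : ℝ) + s) ^ 2 + 2 * s ^ 2) * (μ i) ^ 2
          + s ^ 2 * (d : ℝ) * ((d : ℝ) + 2 * s))
        = -(∑ i, (μ i) ^ 4) + (((d : ℝ) + s) ^ 2 + 2 * s ^ 2) * (∑ i, (μ i) ^ 2)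
          + s ^ 2 * (d : ℝ) * ((d : ℝ) + 2 * s) * n := by
      rw [Finset.sum_add_distrib, Finset.sum_add_distrib, ← Finset.mul_sum,
        Finset.sum_const, Finset.card_univ, Fintype.card_fin, ← Finset.sum_neg_distrib]
      ring
    rw [e1, e2] at h1
    exact h1
  -- chain of inequalities
  have hchain : 2 * s * ((d : ℝ) + s) ^ 2 * S ≤
      -2 * Qg + Dg + (((d : ℝ) + s) ^ 2 + 2 * s ^ 2) * Dg
        + s ^ 2 * (d : ℝ) * ((d : ℝ) + 2 * s) * n := by
    rw [hP2] at hS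
    linarith [hS, hP4]
  have hchain2 : (2 * s * ((d : ℝ) + s) ^ 2 * S) * n ≤
      -2 * Dg ^ 2 + (1 + (((d : ℝ) + s) ^ 2 + 2 * s ^ 2)) * (n : ℝ) * Dg
        + s ^ 2 * (d : ℝ) * ((d : ℝ) + 2 * s) * (n : ℝ) ^ 2 := by
    have h2 := mul_le_mul_of_nonneg_right hchain (le_of_lt hn0)
    have h4 : -2 * ((n : ℝ) * Qg) ≤ -2 * Dg ^ 2 := by linarith
    linarith [h2, h4]
  -- final polynomial inequality
  have hfac1 : 0 ≤ (n : ℝ) * d - Dg := by linarith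
  have hzero : s ^ 2 - ((d : ℝ) - 1) = 0 := by rw [hs2]; ring
  have hBge : 0 ≤ 1 + (((d : ℝ) + s) ^ 2 + 2 * s ^ 2) - 4 * d := by
    have e : 1 + (((d : ℝ) + s) ^ 2 + 2 * s ^ 2) - 4 * d
        = (d : ℝ) ^ 2 + 2 * d * s - d - 2 + 3 * (s ^ 2 - ((d : ℝ) - 1)) := by ring
    rw [e, hzero, mul_zero, add_zero]
    nlinarith [mul_nonneg (by linarith : (0:ℝ) ≤ (d:ℝ) - 3) (by linarith : (0:ℝ) ≤ (d:ℝ)),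
      mul_nonneg (le_of_lt hspos) (by linarith : (0:ℝ) ≤ (d:ℝ))]
  have hfac2 : 0 ≤ (n : ℝ) * (1 + (((d : ℝ) + s) ^ 2 + 2 * s ^ 2) - 2 * d) - 2 * Dg := by
    have e : (n : ℝ) * (1 + (((d : ℝ) + s) ^ 2 + 2 * s ^ 2) - 2 * d) - 2 * Dg
        = (n : ℝ) * (1 + (((d : ℝ) + s) ^ 2 + 2 * s ^ 2) - 4 * d) + 2 * ((n : ℝ) * d - Dg) := by
      ring
    rw [e]
    have := mul_nonneg (le_of_lt hn0) hBge
    linarith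
  have hident : 2 * s * (n : ℝ) ^ 2 * (d : ℝ) * ((d : ℝ) + s) * (s + 1)
      - (-2 * Dg ^ 2 + (1 + (((d : ℝ) + s) ^ 2 + 2 * s ^ 2)) * (n : ℝ) * Dg
        + s ^ 2 * (d : ℝ) * ((d : ℝ) + 2 * s) * (n : ℝ) ^ 2)
      = ((n : ℝ) * d - Dg) * ((n : ℝ) * (1 + (((d : ℝ) + s) ^ 2 + 2 * s ^ 2) - 2 * d) - 2 * Dg)
        + ((d : ℝ) ^ 2 * (n : ℝ) ^ 2 - (d : ℝ) * (n : ℝ) ^ 2) * (s ^ 2 - ((d : ℝ) - 1)) := by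
    ring
  have hchain3 : (2 * s * ((d : ℝ) + s) ^ 2 * S) * n ≤
      2 * s * (n : ℝ) ^ 2 * (d : ℝ) * ((d : ℝ) + s) * (s + 1) := by
    have hpr := mul_nonneg hfac1 hfac2
    rw [hzero, mul_zero, add_zero] at hident
    linarith [hchain2, hident, hpr]
  have hchain4 : 2 * s * ((d : ℝ) + s) ^ 2 * S ≤
      2 * s * (n : ℝ) * (d : ℝ) * ((d : ℝ) + s) * (s + 1) := by
    have := le_of_mul_le_mul_right (by linarith [hchain3] :
      (2 * s * ((d : ℝ) + s) ^ 2 * S) * n ≤ (2 * s * (n : ℝ) * (d : ℝ) * ((d : ℝ) + s) * (s + 1)) * n) hn0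
    exact this
  -- conclude
  have hdpos : 0 < (d : ℝ) + s := by linarith
  have hsd : s * ((d : ℝ) + s) + 1 = (d : ℝ) * (s + 1) := by
    have : s ^ 2 = (d : ℝ) - 1 := hs2
    nlinarith [this]
  have hfpos : 0 < 2 * s * ((d : ℝ) + s) ^ 2 * (n : ℝ) := by positivity
  have hfin2 : 2 * s * ((d : ℝ) + s) ^ 2 * (n : ℝ) * ((1 / (n : ℝ)) * S) ≤
      2 * s * ((d : ℝ) + s) ^ 2 * (n : ℝ) * (s + 1 / ((d : ℝ) + s)) := by
    have e1 : 2 * s * ((d : ℝ) + s) ^ 2 * (n : ℝ) * ((1 / (n : ℝ)) * S)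
        = 2 * s * ((d : ℝ) + s) ^ 2 * S := by
      field_simp
    have e2 : 2 * s * ((d : ℝ) + s) ^ 2 * (n : ℝ) * (s + 1 / ((d : ℝ) + s))
        = 2 * s * (n : ℝ) * (((d : ℝ) + s) * (s * ((d : ℝ) + s) + 1)) := by
      field_simp
    rw [e1, e2, hsd]
    calc 2 * s * ((d : ℝ) + s) ^ 2 * S
        ≤ 2 * s * (n : ℝ) * (d : ℝ) * ((d : ℝ) + s) * (s + 1) := hchain4
      _ = 2 * s * (n : ℝ) * (((d : ℝ) + s) * ((d : ℝ) * (s + 1))) := by ring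
  exact le_of_mul_le_mul_left hfin2 hfpos
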